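/- With the simple compensation formula y' = (1-ε₀)^{-1} y applied to y = (1-ε₀+δ)f, the root mean square error equals (1-ε₀)^{-1} √η Δ, where η = ⟨f²⟩ and Δ² = ⟨δ² f²⟩/⟨f²⟩; in particular the RMSE before mitigation √(η(ε₀² + Δ²)) is reduced by a factor of at least ε₀/Δ · (1-ε₀) when compensating the average depolarising rate. -/

import Mathlib

/-- Compensating the average depolarising rate. With `y_C = (1-(ε₀+δ_C)) f_C`, `⟨δ f²⟩ = 0`, `η = ⟨f²⟩`, `Δ² = ⟨δ² f²⟩/η`:
the formula `y' = (1-ε₀)⁻¹ y` has RMSE `(1-ε₀)⁻¹ √η Δ`, the RMSE before mitigation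
is `√(η(ε₀² + Δ²))`, and the reduction factor is at least `ε₀/Δ · (1-ε₀)`. -/
theorem stmt_15 {ι : Type*} [Fintype ι] [Nonempty ι]
    (f δ y : ι → ℝ) (ε₀ Δ η : ℝ)
    (E : (ι → ℝ) → ℝ) (hE : ∀ g, E g = (∑ i, g i) / (Fintype.card ι))
    (hy : ∀ i, y i = (1 - (ε₀ + δ i)) * f i)
    (hδ : E (fun i => δ i * (f i) ^ 2) = 0)
    (hη : η = E (fun i => (f i) ^ 2))
    (hε₀0 : 0 ≤ ε₀) (hε₀1 : ε₀ < 1)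
    (hΔ0 : 0 ≤ Δ) (hΔ : Δ ^ 2 = E (fun i => (δ i) ^ 2 * (f i) ^ 2) / η) (hη0 : 0 < η) :
    Real.sqrt (E (fun i => ((1 - ε₀)⁻¹ * y i - f i) ^ 2))
        = (1 - ε₀)⁻¹ * Real.sqrt η * Δ
    ∧ Real.sqrt (E (fun i => (y i - f i) ^ 2)) = Real.sqrt (η * (ε₀ ^ 2 + Δ ^ 2))
    ∧ (0 < Δ →
        Real.sqrt (E (fun i => (y i - f i) ^ 2))
          ≥ (ε₀ / Δ * (1 - ε₀))
            * Real.sqrt (E (fun i => ((1 - ε₀)⁻¹ * y i - f i) ^ 2))) := by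
  have hc : (0:ℝ) < 1 - ε₀ := by linarith
  have hcne : (1 - ε₀) ≠ 0 := ne_of_gt hc
  have hn0 : (0:ℝ) < (Fintype.card ι : ℝ) := by
    exact_mod_cast Fintype.card_pos
  have hD2 : E (fun i => (δ i) ^ 2 * (f i) ^ 2) = Δ ^ 2 * η := by
    field_simp at hΔ
    linarith [hΔ]
  -- first expectation
  have key1 : ∀ i, ((1 - ε₀)⁻¹ * y i - f i) ^ 2
      = (1 - ε₀)⁻¹ ^ 2 * ((δ i) ^ 2 * (f i) ^ 2) := by
    intro i
    rw [hy]
    field_simp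
    ring
  have E1 : E (fun i => ((1 - ε₀)⁻¹ * y i - f i) ^ 2)
      = (1 - ε₀)⁻¹ ^ 2 * (Δ ^ 2 * η) := by
    rw [← hD2, hE, hE]
    simp only [key1]
    rw [← Finset.mul_sum, mul_div_assoc]
  have hsqη : Real.sqrt η ^ 2 = η := Real.sq_sqrt hη0.le
  have part1 : Real.sqrt (E (fun i => ((1 - ε₀)⁻¹ * y i - f i) ^ 2))
      = (1 - ε₀)⁻¹ * Real.sqrt η * Δ := by
    rw [E1, show (1 - ε₀)⁻¹ ^ 2 * (Δ ^ 2 * η) = ((1 - ε₀)⁻¹ * Real.sqrt η * Δ) ^ 2 by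
      rw [mul_pow, mul_pow, hsqη]; ring]
    exact Real.sqrt_sq (by positivity)
  -- second expectation
  have hsum : (∑ i, (y i - f i) ^ 2)
      = ε₀ ^ 2 * ∑ i, (f i) ^ 2 + (2 * ε₀) * ∑ i, δ i * (f i) ^ 2
        + ∑ i, (δ i) ^ 2 * (f i) ^ 2 := by
    rw [Finset.mul_sum, Finset.mul_sum, ← Finset.sum_add_distrib, ← Finset.sum_add_distrib]
    exact Finset.sum_congr rfl fun i _ => by rw [hy]; ring
  have E2 : E (fun i => (y i - f i) ^ 2) = η * (ε₀ ^ 2 + Δ ^ 2) := by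
    have := hδ
    have h1 := hη
    rw [hE] at this h1 ⊢
    rw [hE] at hD2
    rw [hsum, add_div, add_div, mul_div_assoc, mul_div_assoc, this, ← h1, hD2]
    ring
  have part2 : Real.sqrt (E (fun i => (y i - f i) ^ 2))
      = Real.sqrt (η * (ε₀ ^ 2 + Δ ^ 2)) := by rw [E2]
  refine ⟨part1, part2, fun hΔpos => ?_⟩
  rw [part1, part2]
  have : ε₀ / Δ * (1 - ε₀) * ((1 - ε₀)⁻¹ * Real.sqrt η * Δ) = ε₀ * Real.sqrt η := by
    field_simp
  rw [this]
  have h1 : ε₀ * Real.sqrt η = Real.sqrt (η * ε₀ ^ 2) := by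
    rw [show η * ε₀ ^ 2 = (ε₀ * Real.sqrt η) ^ 2 by rw [mul_pow, hsqη]; ring]
    exact (Real.sqrt_sq (by positivity)).symm
  rw [h1]
  apply Real.sqrt_le_sqrt
  nlinarith [sq_nonneg Δ]
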